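/- Fix α ∈ ℝ and σ > 0, and let q be a probability density on ℝ^D. Define the Gaussian-channel output density q̄(y) = ∫_{ℝ^D} q(x) (2πσ²)^{−D/2} exp(−‖y − αx‖²/(2σ²)) dx. Then q̄ is differentiable and for every y ∈ ℝ^D with q̄(y) > 0, ‖∇q̄(y)‖ / q̄(y) ≤ ( ∫_{ℝ^D} (‖y − αx‖² / σ⁴) · q(x) (2πσ²)^{−D/2} exp(−‖y − αx‖²/(2σ²)) dx / q̄(y) )^{1/2}; that is, the norm of the score of q̄ at y is bounded by the square root of the conditional second moment E[‖Y − αX‖²/σ⁴ | Y = y] under the joint law of X ~ q and Y = αX + σN with N standard Gaussian. -/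

import Mathlib

open MeasureTheory Real Filter Set
open scoped Topology RealInnerProductSpace

noncomputable section

lemma aux_exp_neg_le_inv {u : ℝ} (hu : 0 < u) : Real.exp (-u) ≤ u⁻¹ := by
  rw [Real.exp_neg]
  exact inv_anti₀ hu (by linarith [Real.add_one_le_exp u])

lemma aux_exp_lin {σ t : ℝ} (hσ : 0 < σ) (ht : 0 ≤ t) :
    t * Real.exp (-t ^ 2 / (2 * σ ^ 2)) ≤ 2 * σ := by
  have hexp1 : Real.exp (-t ^ 2 / (2 * σ ^ 2)) ≤ 1 := by
    rw [Real.exp_le_one_iff]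
    apply div_nonpos_of_nonpos_of_nonneg (by nlinarith [sq_nonneg t]) (by positivity)
  rcases le_or_gt t (2 * σ) with h | h
  · nlinarith [Real.exp_pos (-t ^ 2 / (2 * σ ^ 2))]
  · have hu : 0 < t ^ 2 / (2 * σ ^ 2) := by apply div_pos (by nlinarith) (by positivity)
    have h2 := aux_exp_neg_le_inv hu
    rw [← neg_div] at h2
    have h3 : (t ^ 2 / (2 * σ ^ 2))⁻¹ = 2 * σ ^ 2 / t ^ 2 := by
      rw [inv_div]
    rw [h3] at h2
    calc t * Real.exp (-t ^ 2 / (2 * σ ^ 2)) ≤ t * (2 * σ ^ 2 / t ^ 2) := by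
          gcongr
        _ = 2 * σ ^ 2 / t := by
          have ht0 : t ≠ 0 := by nlinarith
          field_simp
        _ ≤ 2 * σ := by rw [div_le_iff₀ (by linarith)]; nlinarith

lemma aux_exp_sq {σ t : ℝ} (hσ : 0 < σ) (ht : 0 ≤ t) :
    t ^ 2 * Real.exp (-t ^ 2 / (2 * σ ^ 2)) ≤ 4 * σ ^ 2 := by
  have hexp1 : Real.exp (-t ^ 2 / (2 * σ ^ 2)) ≤ 1 := by
    rw [Real.exp_le_one_iff]
    apply div_nonpos_of_nonpos_of_nonneg (by nlinarith [sq_nonneg t]) (by positivity)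
  rcases le_or_gt t (2 * σ) with h | h
  · nlinarith [Real.exp_pos (-t ^ 2 / (2 * σ ^ 2))]
  · have hu : 0 < t ^ 2 / (2 * σ ^ 2) := by apply div_pos (by nlinarith) (by positivity)
    have h2 := aux_exp_neg_le_inv hu
    rw [← neg_div, inv_div] at h2
    calc t ^ 2 * Real.exp (-t ^ 2 / (2 * σ ^ 2)) ≤ t ^ 2 * (2 * σ ^ 2 / t ^ 2) := by gcongr
      _ = 2 * σ ^ 2 := by
        have ht0 : t ≠ 0 := by nlinarith
        field_simp
      _ ≤ 4 * σ ^ 2 := by nlinarith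

lemma aux_hasFDerivAt (D : ℕ) (α σ : ℝ) (hσ : 0 < σ) (a : ℝ) (x y' : EuclideanSpace ℝ (Fin D)) :
    HasFDerivAt (fun y => a * Real.exp (-‖y - α • x‖ ^ 2 / (2 * σ ^ 2)))
      ((a * Real.exp (-‖y' - α • x‖ ^ 2 / (2 * σ ^ 2)) * (σ ^ 2)⁻¹) •
        (innerSL ℝ (α • x - y'))) y' := by
  have h1 : HasFDerivAt (fun y : EuclideanSpace ℝ (Fin D) => y - α • x)
      (ContinuousLinearMap.id ℝ (EuclideanSpace ℝ (Fin D))) y' :=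
    (hasFDerivAt_id y').sub_const _
  have h2 := h1.norm_sq
  have h3 := h2.const_mul (-(2 * σ ^ 2)⁻¹)
  have hfun : (fun y : EuclideanSpace ℝ (Fin D) => -(2 * σ ^ 2)⁻¹ * ‖y - α • x‖ ^ 2)
      = fun y => -‖y - α • x‖ ^ 2 / (2 * σ ^ 2) := by
    funext y; field_simp
  rw [hfun] at h3
  have h4 := h3.exp
  have h5 := h4.const_mul a
  refine h5.congr_fderiv (Eq.symm ?_)
  ext w
  have hvw : α • x - y' = -(y' - α • x) := by abel
  simp only [ContinuousLinearMap.smul_apply, ContinuousLinearMap.coe_smul',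
    Pi.smul_apply, ContinuousLinearMap.coe_comp', Function.comp_apply,
    ContinuousLinearMap.coe_id', id_eq, innerSL_apply_apply, smul_eq_mul, hvw,
    inner_neg_left]
  have hσ2 : (σ : ℝ) ^ 2 ≠ 0 := by positivity
  field_simp
  ring


/-- Output density of the Gaussian channel `Y = αX + σN`, `N ~ N(0, I_D)`, with input
density `q` on `ℝ^D`: `q̄(y) = ∫ q(x) (2πσ²)^{−D/2} exp(−‖y − αx‖²/(2σ²)) dx`. -/
def channelOut {D : ℕ} (α σ : ℝ) (q : EuclideanSpace ℝ (Fin D) → ℝ)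
    (y : EuclideanSpace ℝ (Fin D)) : ℝ :=
  ∫ x, q x * ((2 * π * σ ^ 2) ^ (-(D : ℝ) / 2) *
    Real.exp (-‖y - α • x‖ ^ 2 / (2 * σ ^ 2)))

/-- the Gaussian-channel output density `q̄` is differentiable and the norm
of its score is bounded by the square root of the conditional second moment
`E[‖Y − αX‖²/σ⁴ | Y = y]`. -/
theorem score_norm_le_conditional_moment
    (D : ℕ) (α σ : ℝ) (hσ : 0 < σ)
    (q : EuclideanSpace ℝ (Fin D) → ℝ)
    (hq0 : ∀ x, 0 ≤ q x) (hq1 : ∫ x, q x = 1) (hqi : Integrable q) :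
    Differentiable ℝ (channelOut α σ q) ∧
    ∀ y : EuclideanSpace ℝ (Fin D), 0 < channelOut α σ q y →
      ‖gradient (channelOut α σ q) y‖ / channelOut α σ q y ≤
        Real.sqrt ((∫ x, (‖y - α • x‖ ^ 2 / σ ^ 4) *
            (q x * ((2 * π * σ ^ 2) ^ (-(D : ℝ) / 2) *
              Real.exp (-‖y - α • x‖ ^ 2 / (2 * σ ^ 2)))))
          / channelOut α σ q y) := by
  have hσ2 : (0:ℝ) < σ ^ 2 := by positivity
  set c : ℝ := (2 * π * σ ^ 2) ^ (-(D : ℝ) / 2) with hc_def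
  have hc : 0 < c := Real.rpow_pos_of_pos (mul_pos (mul_pos two_pos Real.pi_pos) hσ2) _
  set k : EuclideanSpace ℝ (Fin D) → EuclideanSpace ℝ (Fin D) → ℝ :=
    fun y x => c * Real.exp (-‖y - α • x‖ ^ 2 / (2 * σ ^ 2)) with hk_def
  have hk_pos : ∀ y x, 0 < k y x := fun y x => mul_pos hc (Real.exp_pos _)
  have hk_le : ∀ y x, k y x ≤ c := by
    intro y x
    have : Real.exp (-‖y - α • x‖ ^ 2 / (2 * σ ^ 2)) ≤ 1 := by
      rw [Real.exp_le_one_iff]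
      exact div_nonpos_of_nonpos_of_nonneg (neg_nonpos.mpr (by positivity)) (by positivity)
    calc k y x ≤ c * 1 := by exact mul_le_mul_of_nonneg_left this hc.le
      _ = c := mul_one c
  have hk_cont : ∀ y, Continuous fun x => k y x := by
    intro y
    exact continuous_const.mul (Real.continuous_exp.comp
      (((continuous_const.sub (continuous_id.const_smul α)).norm.pow 2).neg.div_const _))
  have hqm := hqi.aestronglyMeasurable
  have hCO : channelOut α σ q = fun y => ∫ x, q x * k y x := rfl
  -- measurability and integrability of the integrand
  have hFmeas : ∀ y, AEStronglyMeasurable (fun x => q x * k y x) volume :=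
    fun y => hqm.mul (hk_cont y).aestronglyMeasurable
  have hFint : ∀ y, Integrable (fun x => q x * k y x) := by
    intro y
    refine (hqi.mul_const c).mono' (hFmeas y) (Eventually.of_forall fun x => ?_)
    rw [Real.norm_of_nonneg (mul_nonneg (hq0 x) (hk_pos y x).le)]
    exact mul_le_mul_of_nonneg_left (hk_le y x) (hq0 x)
  -- the derivative candidate
  set F' : EuclideanSpace ℝ (Fin D) → EuclideanSpace ℝ (Fin D) →
      (EuclideanSpace ℝ (Fin D) →L[ℝ] ℝ) :=
    fun y x => (q x * k y x * (σ ^ 2)⁻¹) • (innerSL ℝ (α • x - y)) with hF'_def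
  have hderiv : ∀ (x y' : EuclideanSpace ℝ (Fin D)),
      HasFDerivAt (fun y => q x * k y x) (F' y' x) y' := by
    intro x y'
    have := aux_hasFDerivAt D α σ hσ (q x * c) x y'
    have hfun : (fun y : EuclideanSpace ℝ (Fin D) =>
        (q x * c) * Real.exp (-‖y - α • x‖ ^ 2 / (2 * σ ^ 2))) = fun y => q x * k y x := by
      funext y; rw [hk_def]; ring
    rw [hfun] at this
    convert this using 2
    · rfl
    · rfl
    · rw [hk_def]; ring
  have hnorm : ∀ (y' x : EuclideanSpace ℝ (Fin D)),
      ‖F' y' x‖ = q x * k y' x * (σ ^ 2)⁻¹ * ‖y' - α • x‖ := by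
    intro y' x
    have hre : F' y' x = (q x * k y' x * (σ ^ 2)⁻¹) • (innerSL ℝ (α • x - y')) := rfl
    rw [hre]
    refine (norm_smul (q x * k y' x * (σ ^ 2)⁻¹) (innerSL ℝ (α • x - y'))).trans ?_
    rw [innerSL_apply_norm, Real.norm_of_nonneg
      (mul_nonneg (mul_nonneg (hq0 x) (hk_pos y' x).le) (by positivity)), norm_sub_rev]
  have hbound : ∀ (y' x : EuclideanSpace ℝ (Fin D)),
      ‖F' y' x‖ ≤ q x * (c * (2 * σ) * (σ ^ 2)⁻¹) := by
    intro y' x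
    rw [hnorm]
    have hA := aux_exp_lin hσ (norm_nonneg (y' - α • x))
    have h1 : q x * k y' x * (σ ^ 2)⁻¹ * ‖y' - α • x‖
        = (q x * c * (σ ^ 2)⁻¹) *
          (‖y' - α • x‖ * Real.exp (-‖y' - α • x‖ ^ 2 / (2 * σ ^ 2))) := by
      rw [hk_def]; ring
    rw [h1]
    calc (q x * c * (σ ^ 2)⁻¹) *
          (‖y' - α • x‖ * Real.exp (-‖y' - α • x‖ ^ 2 / (2 * σ ^ 2)))
        ≤ (q x * c * (σ ^ 2)⁻¹) * (2 * σ) := by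
          apply mul_le_mul_of_nonneg_left hA
          have := hq0 x; positivity
      _ = q x * (c * (2 * σ) * (σ ^ 2)⁻¹) := by ring
  have hF'meas : ∀ y, AEStronglyMeasurable (F' y) volume := by
    intro y
    refine AEStronglyMeasurable.smul (f := fun x => q x * k y x * (σ ^ 2)⁻¹)
      (g := fun x => innerSL ℝ (α • x - y)) ?_ ?_
    · exact (hqm.mul (hk_cont y).aestronglyMeasurable).mul_const _
    · exact ((innerSL ℝ).continuous.comp
        ((continuous_id.const_smul α).sub continuous_const)).aestronglyMeasurable
  have hmain : ∀ y, HasFDerivAt (channelOut α σ q) (∫ x, F' y x) y := by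
    intro y
    rw [hCO]
    exact hasFDerivAt_integral_of_dominated_of_fderiv_le (Metric.ball_mem_nhds y one_pos)
      (Eventually.of_forall fun y' => hFmeas y') (hFint y) (hF'meas y)
      (Eventually.of_forall fun x y' _ => hbound y' x)
      (hqi.mul_const _)
      (Eventually.of_forall fun x y' _ => hderiv x y')
  refine ⟨fun y => (hmain y).differentiableAt, ?_⟩
  intro y hQ
  set Q : ℝ := channelOut α σ q y with hQ_def
  -- identify the gradient
  have hgrad : ‖gradient (channelOut α σ q) y‖ = ‖∫ x, F' y x‖ := by
    have hg := (hmain y).hasGradientAt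
    rw [hg.gradient]
    exact LinearIsometryEquiv.norm_map _ _
  -- the norm bound
  have hnormle : ‖∫ x, F' y x‖ ≤ ∫ x, q x * k y x * (σ ^ 2)⁻¹ * ‖y - α • x‖ := by
    refine (norm_integral_le_integral_norm _).trans_eq ?_
    exact integral_congr_ae (Eventually.of_forall fun x => hnorm y x)
  -- Cauchy–Schwarz
  set w : EuclideanSpace ℝ (Fin D) → ℝ := fun x => q x * k y x with hw_def
  have hw_nonneg : ∀ x, 0 ≤ w x := fun x => mul_nonneg (hq0 x) (hk_pos y x).le
  have hw_meas : AEStronglyMeasurable w volume := hFmeas y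
  have hw_int : Integrable w := hFint y
  set f : EuclideanSpace ℝ (Fin D) → ℝ := fun x => Real.sqrt (w x) with hf_def
  set g : EuclideanSpace ℝ (Fin D) → ℝ :=
    fun x => (‖y - α • x‖ / σ ^ 2) * Real.sqrt (w x) with hg_def
  have hf_meas : AEStronglyMeasurable f volume :=
    Real.continuous_sqrt.comp_aestronglyMeasurable hw_meas
  have hg_meas : AEStronglyMeasurable g volume := by
    refine AEStronglyMeasurable.mul ?_ hf_meas
    exact (((continuous_const.sub (continuous_id.const_smul α)).norm).div_const _).aestronglyMeasurable
  have hf_sq : ∀ x, f x ^ 2 = w x := fun x => Real.sq_sqrt (hw_nonneg x)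
  have hg_sq : ∀ x, g x ^ 2 = (‖y - α • x‖ ^ 2 / σ ^ 4) * w x := by
    intro x
    rw [hg_def]
    have : (Real.sqrt (w x)) ^ 2 = w x := Real.sq_sqrt (hw_nonneg x)
    rw [mul_pow, this, div_pow]
    congr 2
    ring
  have hM_int : Integrable (fun x => (‖y - α • x‖ ^ 2 / σ ^ 4) * w x) := by
    refine (hqi.mul_const (c * (4 * σ ^ 2) / σ ^ 4)).mono'
      ((((continuous_const.sub (continuous_id.const_smul α)).norm.pow 2).div_const
        _).aestronglyMeasurable.mul hw_meas) (Eventually.of_forall fun x => ?_)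
    have hB := aux_exp_sq hσ (norm_nonneg (y - α • x))
    have h0 : (0:ℝ) ≤ (‖y - α • x‖ ^ 2 / σ ^ 4) * w x := by
      apply mul_nonneg (by positivity) (hw_nonneg x)
    rw [Real.norm_of_nonneg h0]
    have h1 : (‖y - α • x‖ ^ 2 / σ ^ 4) * w x
        = (q x * c / σ ^ 4) *
          (‖y - α • x‖ ^ 2 * Real.exp (-‖y - α • x‖ ^ 2 / (2 * σ ^ 2))) := by
      rw [hw_def, hk_def]; ring
    rw [h1]
    calc (q x * c / σ ^ 4) *
          (‖y - α • x‖ ^ 2 * Real.exp (-‖y - α • x‖ ^ 2 / (2 * σ ^ 2)))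
        ≤ (q x * c / σ ^ 4) * (4 * σ ^ 2) := by
          apply mul_le_mul_of_nonneg_left hB
          have := hq0 x; positivity
      _ = q x * (c * (4 * σ ^ 2) / σ ^ 4) := by ring
  have hf_mem : MemLp f 2 volume := by
    rw [memLp_two_iff_integrable_sq hf_meas]
    refine hw_int.congr (Eventually.of_forall fun x => (hf_sq x).symm)
  have hg_mem : MemLp g 2 volume := by
    rw [memLp_two_iff_integrable_sq hg_meas]
    refine hM_int.congr (Eventually.of_forall fun x => (hg_sq x).symm)
  have hconj : Real.HolderConjugate 2 2 := Real.HolderConjugate.two_two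
  have hf_nn : 0 ≤ᵐ[volume] f :=
    Eventually.of_forall fun x => Real.sqrt_nonneg _
  have hg_nn : 0 ≤ᵐ[volume] g :=
    Eventually.of_forall fun x => mul_nonneg (by positivity) (Real.sqrt_nonneg _)
  have hCS := integral_mul_le_Lp_mul_Lq_of_nonneg (f := f) (g := g) hconj hf_nn hg_nn
    (by rwa [show ENNReal.ofReal 2 = 2 by norm_num] )
    (by rwa [show ENNReal.ofReal 2 = 2 by norm_num] )
  -- rewrite the three integrals in hCS
  have e1 : ∫ x, f x * g x = ∫ x, q x * k y x * (σ ^ 2)⁻¹ * ‖y - α • x‖ := by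
    refine integral_congr_ae (Eventually.of_forall fun x => ?_)
    rw [hf_def, hg_def]
    have : Real.sqrt (w x) * Real.sqrt (w x) = w x := Real.mul_self_sqrt (hw_nonneg x)
    calc Real.sqrt (w x) * ((‖y - α • x‖ / σ ^ 2) * Real.sqrt (w x))
        = (Real.sqrt (w x) * Real.sqrt (w x)) * (‖y - α • x‖ / σ ^ 2) := by ring
      _ = w x * (‖y - α • x‖ / σ ^ 2) := by rw [this]
      _ = q x * k y x * (σ ^ 2)⁻¹ * ‖y - α • x‖ := by rw [hw_def]; ring
  have e2 : ∫ x, f x ^ (2:ℝ) = Q := by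
    have : Q = ∫ x, q x * k y x := rfl
    rw [this]
    refine integral_congr_ae (Eventually.of_forall fun x => ?_)
    show f x ^ (2:ℝ) = q x * k y x
    rw [Real.rpow_two]
    exact hf_sq x
  have e3 : ∫ x, g x ^ (2:ℝ) = ∫ x, (‖y - α • x‖ ^ 2 / σ ^ 4) * w x := by
    refine integral_congr_ae (Eventually.of_forall fun x => ?_)
    show g x ^ (2:ℝ) = (‖y - α • x‖ ^ 2 / σ ^ 4) * w x
    rw [Real.rpow_two]
    exact hg_sq x
  rw [e1, e2, e3] at hCS
  set M : ℝ := ∫ x, (‖y - α • x‖ ^ 2 / σ ^ 4) * w x with hM_def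
  have hM_nonneg : 0 ≤ M :=
    integral_nonneg fun x => mul_nonneg (by positivity) (hw_nonneg x)
  -- final chain
  have hQ' : (0:ℝ) < Q := hQ
  have hSle : (∫ x, q x * k y x * (σ ^ 2)⁻¹ * ‖y - α • x‖)
      ≤ Real.sqrt Q * Real.sqrt M := by
    rw [Real.sqrt_eq_rpow, Real.sqrt_eq_rpow]
    exact hCS
  have hsQ : (0:ℝ) < Real.sqrt Q := Real.sqrt_pos.mpr hQ'
  have key : Real.sqrt Q * Real.sqrt M / Q = Real.sqrt (M / Q) := by
    rw [Real.sqrt_div hM_nonneg, div_eq_div_iff (ne_of_gt hQ') (ne_of_gt hsQ),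
      show Real.sqrt Q * Real.sqrt M * Real.sqrt Q
          = Real.sqrt M * (Real.sqrt Q * Real.sqrt Q) by ring,
      Real.mul_self_sqrt hQ'.le]
  calc ‖gradient (channelOut α σ q) y‖ / Q
      ≤ (∫ x, q x * k y x * (σ ^ 2)⁻¹ * ‖y - α • x‖) / Q :=
        (div_le_div_iff_of_pos_right hQ').mpr (hgrad ▸ hnormle)
    _ ≤ (Real.sqrt Q * Real.sqrt M) / Q := (div_le_div_iff_of_pos_right hQ').mpr hSle
    _ = Real.sqrt (M / Q) := key
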